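/- Let α > 0 and θ ∈ (0, π/2]. Suppose Q₁, Q₂ ∈ M₂(ℝ) both realize the pair (α, θ), i.e. each Qᵢ has eigenvalues α and −α, with corresponding real eigenvectors whose spanned lines make angle exactly θ with each other. Then there exists an orthogonal matrix O ∈ M₂(ℝ) (OᵀO = I) such that Q₂ = O·Q₁·Oᵀ. In particular ‖exp(Q₂) − I‖ = ‖exp(Q₁) − I‖, so the quantity ρ_θ(α) := ‖exp(Q) − I‖ is well defined, independent of the choice of Q realizing (α, θ). -/

import Mathlib

open Set Real
open scoped RealInnerProductSpace

/-- The Euclidean plane. -/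
abbrev E2 : Type := EuclideanSpace ℝ (Fin 2)

/-- Continuous linear endomorphisms of the Euclidean plane
(2×2 real matrices with the operator norm). -/
abbrev M2 : Type := E2 →L[ℝ] E2

/-- The angle in `[0, π/2]` between the lines `ℝu` and `ℝv` in the Euclidean plane. -/
noncomputable def lineAngle (u v : E2) : ℝ := Real.arccos (|⟪u, v⟫| / (‖u‖ * ‖v‖))

/-- `Q` realizes the pair `(α, θ)`: it has eigenvalues `α` and `-α`, and the angle
between the corresponding eigenlines is exactly `θ`. -/
def Realizes (Q : M2) (α θ : ℝ) : Prop :=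
  ∃ u v : E2, u ≠ 0 ∧ v ≠ 0 ∧ Q u = α • u ∧ Q v = (-α) • v ∧ lineAngle u v = θ

/-- Any two matrices realizing the same pair `(α, θ)` are orthogonally conjugate; in
particular `‖exp(Q) − I‖` depends only on `(α, θ)`. -/

lemma exists_adapted (Q : M2) (α θ : ℝ) (hθ : θ ∈ Set.Ioc 0 (π / 2)) (h : Realizes Q α θ) :
    ∃ e w : E2, ‖e‖ = 1 ∧ ‖w‖ = 1 ∧ ⟪e, w⟫ = 0 ∧ Q e = α • e ∧
      Q (Real.cos θ • e + Real.sin θ • w) = (-α) • (Real.cos θ • e + Real.sin θ • w) := by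
  obtain ⟨e, v₀, hne, hnv₀, hQe, hQv₀, hcs⟩ :
      ∃ e v₀ : E2, ‖e‖ = 1 ∧ ‖v₀‖ = 1 ∧ Q e = α • e ∧ Q v₀ = (-α) • v₀ ∧
        Real.cos θ = |⟪e, v₀⟫| := by
    obtain ⟨u, v, hu, hv, hQu, hQv, hang⟩ := h
    have hun : (0:ℝ) < ‖u‖ := norm_pos_iff.mpr hu
    have hvn : (0:ℝ) < ‖v‖ := norm_pos_iff.mpr hv
    refine ⟨‖u‖⁻¹ • u, ‖v‖⁻¹ • v, ?_, ?_, ?_, ?_, ?_⟩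
    · rw [norm_smul, norm_inv, norm_norm, inv_mul_cancel₀ hun.ne']
    · rw [norm_smul, norm_inv, norm_norm, inv_mul_cancel₀ hvn.ne']
    · rw [map_smul, hQu, smul_comm]
    · rw [map_smul, hQv, smul_comm]
    · have hinner : |⟪‖u‖⁻¹ • u, ‖v‖⁻¹ • v⟫| = |⟪u, v⟫| / (‖u‖ * ‖v‖) := by
        rw [real_inner_smul_left, real_inner_smul_right, abs_mul, abs_mul,
          abs_inv, abs_inv, abs_norm, abs_norm]
        field_simp
      rw [hinner, ← hang, lineAngle, Real.cos_arccos]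
      · have : (0:ℝ) ≤ |⟪u, v⟫| / (‖u‖ * ‖v‖) := by positivity
        linarith
      · rw [div_le_one (by positivity)]
        exact abs_real_inner_le_norm u v
  have hs0 : 0 < Real.sin θ :=
    Real.sin_pos_of_pos_of_lt_pi hθ.1 (lt_of_le_of_lt hθ.2 (by linarith [Real.pi_pos]))
  have hc0 : (0:ℝ) ≤ Real.cos θ :=
    Real.cos_nonneg_of_mem_Icc ⟨by linarith [Real.pi_pos, hθ.1], hθ.2⟩
  set c := Real.cos θ with hc
  set s := Real.sin θ with hs
  obtain ⟨v₁, hnv₁, hQv₁, hiv₁⟩ : ∃ v₁ : E2, ‖v₁‖ = 1 ∧ Q v₁ = (-α) • v₁ ∧ ⟪e, v₁⟫ = c := by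
    rcases le_or_gt 0 ⟪e, v₀⟫ with hpos | hneg
    · exact ⟨v₀, hnv₀, hQv₀, by rw [hcs, abs_of_nonneg hpos]⟩
    · refine ⟨-v₀, by simpa using hnv₀, by rw [map_neg, hQv₀, smul_neg], ?_⟩
      rw [inner_neg_right, hcs, abs_of_neg hneg]
  have hee : ⟪e, e⟫ = 1 := by
    rw [real_inner_self_eq_norm_mul_norm, hne]; norm_num
  have hvv : ⟪v₁, v₁⟫ = 1 := by
    rw [real_inner_self_eq_norm_mul_norm, hnv₁]; norm_num
  have hv₁e : ⟪v₁, e⟫ = c := by rw [real_inner_comm]; exact hiv₁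
  have hcsq : c ^ 2 + s ^ 2 = 1 := by
    rw [hc, hs]; exact Real.cos_sq_add_sin_sq θ
  obtain ⟨w, hvw, hew, hnw⟩ : ∃ w : E2, c • e + s • w = v₁ ∧ ⟪e, w⟫ = 0 ∧ ‖w‖ = 1 := by
    refine ⟨s⁻¹ • (v₁ - c • e), ?_, ?_, ?_⟩
    · rw [smul_smul, mul_inv_cancel₀ hs0.ne', one_smul]; abel
    · rw [real_inner_smul_right, inner_sub_right, real_inner_smul_right, hee, hiv₁]
      ring
    · have h1 : ‖s⁻¹ • (v₁ - c • e)‖ * ‖s⁻¹ • (v₁ - c • e)‖ = 1 := by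
        rw [← real_inner_self_eq_norm_mul_norm, real_inner_smul_left, real_inner_smul_right,
          inner_sub_left, inner_sub_right, inner_sub_right, real_inner_smul_left,
          real_inner_smul_right, real_inner_smul_left, real_inner_smul_right,
          hee, hvv, hiv₁, hv₁e]
        field_simp
        nlinarith [hcsq]
      nlinarith [norm_nonneg (s⁻¹ • (v₁ - c • e))]
  exact ⟨e, w, hne, hnw, hew, hQe, by rw [hvw]; exact hQv₁⟩

lemma orthonormal_pair {e w : E2} (hne : ‖e‖ = 1) (hnw : ‖w‖ = 1) (hew : ⟪e, w⟫ = 0) :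
    Orthonormal ℝ ![e, w] := by
  rw [orthonormal_iff_ite]
  intro i j
  have hee : ⟪e, e⟫ = 1 := by rw [real_inner_self_eq_norm_mul_norm, hne]; norm_num
  have hww : ⟪w, w⟫ = 1 := by rw [real_inner_self_eq_norm_mul_norm, hnw]; norm_num
  have hwe : ⟪w, e⟫ = 0 := by rw [real_inner_comm]; exact hew
  fin_cases i <;> fin_cases j <;>
    simp only [Matrix.cons_val_zero, Matrix.cons_val_one, Matrix.head_cons, Fin.mk_zero,
      Fin.mk_one] <;>
    simp [hee, hww, hwe, hew, hne, hnw]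

noncomputable def onBasis {e w : E2} (hne : ‖e‖ = 1) (hnw : ‖w‖ = 1) (hew : ⟪e, w⟫ = 0) :
    Module.Basis (Fin 2) ℝ E2 :=
  basisOfLinearIndependentOfCardEqFinrank (orthonormal_pair hne hnw hew).linearIndependent
    (by simp)

lemma onBasis_coe {e w : E2} (hne : ‖e‖ = 1) (hnw : ‖w‖ = 1) (hew : ⟪e, w⟫ = 0) :
    ⇑(onBasis hne hnw hew) = ![e, w] :=
  coe_basisOfLinearIndependentOfCardEqFinrank _ _

lemma onBasis_orthonormal {e w : E2} (hne : ‖e‖ = 1) (hnw : ‖w‖ = 1) (hew : ⟪e, w⟫ = 0) :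
    Orthonormal ℝ ⇑(onBasis hne hnw hew) := by
  rw [onBasis_coe]; exact orthonormal_pair hne hnw hew

theorem realizes_orthogonally_conjugate
    (α : ℝ) (hα : 0 < α) (θ : ℝ) (hθ : θ ∈ Set.Ioc 0 (π / 2))
    (Q₁ Q₂ : M2) (h₁ : Realizes Q₁ α θ) (h₂ : Realizes Q₂ α θ) :
    ∃ O : M2, ContinuousLinearMap.adjoint O * O = 1 ∧
      Q₂ = O * Q₁ * ContinuousLinearMap.adjoint O ∧
      ‖NormedSpace.exp Q₂ - 1‖ = ‖NormedSpace.exp Q₁ - 1‖ := by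
  obtain ⟨e₁, w₁, hne₁, hnw₁, hew₁, hQe₁, hQv₁⟩ := exists_adapted Q₁ α θ hθ h₁
  obtain ⟨e₂, w₂, hne₂, hnw₂, hew₂, hQe₂, hQv₂⟩ := exists_adapted Q₂ α θ hθ h₂
  have hs0 : 0 < Real.sin θ :=
    Real.sin_pos_of_pos_of_lt_pi hθ.1 (lt_of_le_of_lt hθ.2 (by linarith [Real.pi_pos]))
  set c := Real.cos θ with hc
  set s := Real.sin θ with hs
  set b₁ := onBasis hne₁ hnw₁ hew₁ with hb₁
  set b₂ := onBasis hne₂ hnw₂ hew₂ with hb₂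
  set O' : E2 ≃ₗᵢ[ℝ] E2 :=
    (onBasis_orthonormal hne₁ hnw₁ hew₁).equiv (onBasis_orthonormal hne₂ hnw₂ hew₂)
      (Equiv.refl _) with hO'
  have hb₁0 : b₁ 0 = e₁ := by
    have := congrFun (onBasis_coe hne₁ hnw₁ hew₁) 0; simpa using this
  have hb₁1 : b₁ 1 = w₁ := by
    have := congrFun (onBasis_coe hne₁ hnw₁ hew₁) 1; simpa using this
  have hb₂0 : b₂ 0 = e₂ := by
    have := congrFun (onBasis_coe hne₂ hnw₂ hew₂) 0; simpa using this
  have hb₂1 : b₂ 1 = w₂ := by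
    have := congrFun (onBasis_coe hne₂ hnw₂ hew₂) 1; simpa using this
  have hOe : O' e₁ = e₂ := by
    have := Orthonormal.equiv_apply (onBasis_orthonormal hne₁ hnw₁ hew₁)
      (onBasis_orthonormal hne₂ hnw₂ hew₂) (Equiv.refl _) 0
    rw [← hO'] at this
    rw [← hb₁0, this, Equiv.refl_apply, hb₂0]
  have hOw : O' w₁ = w₂ := by
    have := Orthonormal.equiv_apply (onBasis_orthonormal hne₁ hnw₁ hew₁)
      (onBasis_orthonormal hne₂ hnw₂ hew₂) (Equiv.refl _) 1
    rw [← hO'] at this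
    rw [← hb₁1, this, Equiv.refl_apply, hb₂1]
  have hOse : O'.symm e₂ = e₁ := by rw [← hOe, LinearIsometryEquiv.symm_apply_apply]
  have hOsw : O'.symm w₂ = w₁ := by rw [← hOw, LinearIsometryEquiv.symm_apply_apply]
  set O : M2 := (O' : M2) with hO
  have hadj : ContinuousLinearMap.adjoint O = (O'.symm : M2) :=
    LinearIsometryEquiv.adjoint_eq_symm O'
  have hOapp : ∀ x : E2, O x = O' x := fun x => rfl
  have hOsapp : ∀ x : E2, (O'.symm : M2) x = O'.symm x := fun x => rfl
  have hOO1 : O * (O'.symm : M2) = 1 := by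
    refine ContinuousLinearMap.ext fun x => ?_
    simp [ContinuousLinearMap.mul_apply, hOapp, hOsapp]
  have hOO2 : (O'.symm : M2) * O = 1 := by
    refine ContinuousLinearMap.ext fun x => ?_
    simp [ContinuousLinearMap.mul_apply, hOapp, hOsapp]
  have heval : ∀ x : E2, (O * Q₁ * ContinuousLinearMap.adjoint O) x = O' (Q₁ (O'.symm x)) := by
    intro x
    rw [hadj]
    simp [ContinuousLinearMap.mul_apply, hOapp, hOsapp]
  -- key equalities on the basis
  have key_e : Q₂ e₂ = O' (Q₁ (O'.symm e₂)) := by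
    rw [hOse, hQe₁, map_smul, hOe, hQe₂]
  have hsw₁ : s • Q₁ w₁ = (-α) • (c • e₁ + s • w₁) - c • (α • e₁) := by
    have h := hQv₁
    rw [map_add, map_smul, map_smul, hQe₁] at h
    rw [← h]; abel
  have hsw₂ : s • Q₂ w₂ = (-α) • (c • e₂ + s • w₂) - c • (α • e₂) := by
    have h := hQv₂
    rw [map_add, map_smul, map_smul, hQe₂] at h
    rw [← h]; abel
  have key_w : Q₂ w₂ = O' (Q₁ (O'.symm w₂)) := by
    refine smul_right_injective E2 hs0.ne' ?_
    show s • Q₂ w₂ = s • O' (Q₁ (O'.symm w₂))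
    rw [hsw₂, hOsw, ← map_smul, hsw₁]
    simp only [map_sub, map_smul, map_add, hOe, hOw]
  have hconj : Q₂ = O * Q₁ * ContinuousLinearMap.adjoint O := by
    refine ContinuousLinearMap.coe_injective ?_
    refine Module.Basis.ext b₂ fun i => ?_
    fin_cases i
    · simpa [hb₂0, heval, hadj, hOapp, hOsapp] using key_e
    · simpa [hb₂1, heval, hadj, hOapp, hOsapp] using key_w
  refine ⟨O, ?_, hconj, ?_⟩
  · rw [hadj]; exact hOO2
  · set U : M2ˣ := ⟨O, (O'.symm : M2), hOO1, hOO2⟩ with hU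
    have hexp : NormedSpace.exp Q₂ = O * NormedSpace.exp Q₁ * (O'.symm : M2) := by
      rw [hconj, hadj]
      letI : NormedAlgebra ℚ M2 := NormedAlgebra.restrictScalars ℚ ℝ M2
      exact NormedSpace.exp_units_conj U Q₁
    have hsub : NormedSpace.exp Q₂ - 1
        = O * (NormedSpace.exp Q₁ - 1) * (O'.symm : M2) := by
      rw [hexp, mul_sub, sub_mul, mul_one, hOO1]
    rw [hsub]
    have hre : O * (NormedSpace.exp Q₁ - 1) * (O'.symm : M2)
        = ((O'.toLinearIsometry.toContinuousLinearMap.comp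
            (NormedSpace.exp Q₁ - 1)).comp
            (O'.symm : E2 →L[ℝ] E2)) := rfl
    rw [hre, ContinuousLinearMap.opNorm_comp_linearIsometryEquiv,
      LinearIsometry.norm_toContinuousLinearMap_comp]
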